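/- Let θ be the antimorphic involution induced by an involutive letter map t : Σ → Σ, and let u, v, w ∈ Σ+ be such that uv = θ(v)w and u ⇄θ v = v ⇄θ w. Then one of the following holds: (1) u = θ(w) and v = γw for some γ ∈ P_θ; (2) there exist x, y ∈ P_θ and j ≥ 0 with u = (xy)^{j+1}x = w and v = yx; (3) there exist a word x and y ∈ P_θ with u = xy = θ(w) and v = θ(x); (4) there exist x, y ∈ P_θ with u = xy = θ(w) and v = x; (5) there exist α ∈ P_θ and m, n ≥ 1 with u = αᵐ = w and v = αⁿ; (6) there exist t' ∈ Σ+ and k, n ≥ 0 such that, with s = t'θ(t'), u = θ(t')sᵏ = θ(w) and v = sⁿt'. -/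

import Mathlib

/-- The n-th power of a word: `p` concatenated with itself `n` times. -/
def listPow {α : Type*} (p : List α) (n : ℕ) : List α := (List.replicate n p).flatten

/-- The strong θ-bi-catenation of two words. -/
def biCat {α : Type*} (θ : List α → List α) (u v : List α) : Set (List α) :=
  {u ++ v, u ++ θ v, θ u ++ v, θ u ++ θ v, v ++ u, v ++ θ u, θ v ++ u, θ v ++ θ u}

namespace WordTool
open List

variable {α : Type*}

theorem lp_zero (a : List α) : listPow a 0 = [] := rfl
theorem lp_succ (a : List α) (n : ℕ) : listPow a (n+1) = a ++ listPow a n := by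
  simp [listPow, List.replicate_succ]
theorem lp_len (a : List α) (n : ℕ) : (listPow a n).length = n * a.length := by
  induction n with
  | zero => simp [lp_zero]
  | succ n ih => simp [lp_succ, ih, Nat.succ_mul, Nat.add_comm]
theorem lp_add (a : List α) (m n : ℕ) : listPow a (m+n) = listPow a m ++ listPow a n := by
  induction m with
  | zero => simp [lp_zero, Nat.zero_add]
  | succ m ih => rw [Nat.succ_add, lp_succ, ih, lp_succ, List.append_assoc]
theorem lp_succ' (a : List α) (n : ℕ) : listPow a (n+1) = listPow a n ++ a := by
  rw [lp_add, lp_succ, lp_zero, List.append_nil]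
theorem lp_one (a : List α) : listPow a 1 = a := by
  rw [lp_succ, lp_zero, List.append_nil]
theorem lp_shift (p q : List α) (k : ℕ) :
    p ++ listPow (q ++ p) k = listPow (p ++ q) k ++ p := by
  induction k with
  | zero => simp [lp_zero]
  | succ k ih =>
      rw [lp_succ, lp_succ]
      rw [show p ++ ((q ++ p) ++ listPow (q ++ p) k) = (p ++ q) ++ (p ++ listPow (q ++ p) k) by
        simp [List.append_assoc], ih]
      simp [List.append_assoc]
theorem lp_mul (z : List α) (a k : ℕ) : listPow (listPow z a) k = listPow z (k * a) := by
  induction k with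
  | zero => simp [lp_zero]
  | succ k ih => rw [lp_succ, ih, Nat.succ_mul, Nat.add_comm, lp_add]

theorem pow_inj {a b : List α} {n : ℕ} (hn : n ≠ 0)
    (h : listPow a n = listPow b n) (hl : a.length = b.length) : a = b := by
  obtain ⟨m, rfl⟩ : ∃ m, n = m + 1 := ⟨n - 1, by omega⟩
  rw [lp_succ, lp_succ] at h
  exact List.append_inj_left h hl

theorem pref_of_eq {a b c d : List α} (h : a ++ b = c ++ d) (hl : a.length ≤ c.length) :
    a <+: c := by
  have h1 : a <+: c ++ d := ⟨b, h⟩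
  exact List.prefix_of_prefix_length_le h1 (List.prefix_append c d) hl

/-- conjugacy lemma -/
theorem conj {x z y : List α} (hx : x ≠ []) (h : x ++ z = z ++ y) :
    ∃ p q k, x = p ++ q ∧ y = q ++ p ∧ z = listPow (p ++ q) k ++ p := by
  suffices H : ∀ n (x z y : List α), z.length ≤ n → x ≠ [] → x ++ z = z ++ y →
      ∃ p q k, x = p ++ q ∧ y = q ++ p ∧ z = listPow (p ++ q) k ++ p from
    H z.length x z y le_rfl hx h
  intro n
  induction n with
  | zero =>
      intro x z y hz hx h
      have hznil : z = [] := List.eq_nil_of_length_eq_zero (Nat.le_zero.mp hz)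
      subst hznil
      refine ⟨[], x, 0, by simp, by simpa using h.symm, by simp [lp_zero]⟩
  | succ n ih =>
      intro x z y hz hx h
      rcases le_or_gt z.length x.length with hle | hlt
      · -- z is a prefix of x
        obtain ⟨r, rfl⟩ := pref_of_eq (a := z) (b := y) (c := x) (d := z) h.symm hle
        refine ⟨z, r, 0, rfl, ?_, by simp [lp_zero]⟩
        have := h
        rw [List.append_assoc] at this
        exact (List.append_cancel_left this).symm
      · -- x is a proper prefix of z
        obtain ⟨z', rfl⟩ := pref_of_eq h (Nat.le_of_lt hlt)
        have h' : x ++ z' = z' ++ y := by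
          have h2 : x ++ (x ++ z') = x ++ (z' ++ y) := by simpa [List.append_assoc] using h
          exact List.append_cancel_left h2
        have hlen : z'.length ≤ n := by
          have hxlen : 0 < x.length := List.length_pos_iff.mpr hx
          have : (x ++ z').length = x.length + z'.length := List.length_append
          omega
        obtain ⟨p, q, k, hxe, hye, hze⟩ := ih x z' y hlen hx h'
        refine ⟨p, q, k + 1, hxe, hye, ?_⟩
        rw [hze, lp_succ, hxe]
        simp [List.append_assoc]

/-- commutation lemma -/
theorem comm {x y : List α} (h : x ++ y = y ++ x) :
    ∃ z i j, x = listPow z i ∧ y = listPow z j := by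
  suffices H : ∀ n (x y : List α), x.length + y.length ≤ n → x ++ y = y ++ x →
      ∃ z i j, x = listPow z i ∧ y = listPow z j from
    H (x.length + y.length) x y le_rfl h
  intro n
  induction n with
  | zero =>
      intro x y hl h
      have hx : x = [] := List.eq_nil_of_length_eq_zero (by omega)
      have hy : y = [] := List.eq_nil_of_length_eq_zero (by omega)
      exact ⟨[], 0, 0, by simp [hx, lp_zero], by simp [hy, lp_zero]⟩
  | succ n ih =>
      intro x y hl h
      rcases eq_or_ne x [] with rfl | hx
      · exact ⟨y, 0, 1, by simp [lp_zero], by simp [lp_one]⟩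
      rcases eq_or_ne y [] with rfl | hy
      · exact ⟨x, 1, 0, by simp [lp_one], by simp [lp_zero]⟩
      rcases le_or_gt x.length y.length with hle | hlt
      · obtain ⟨y', rfl⟩ := pref_of_eq h hle
        have h' : x ++ y' = y' ++ x := by
          have h2 : x ++ (x ++ y') = x ++ (y' ++ x) := by simpa [List.append_assoc] using h
          exact List.append_cancel_left h2
        have hlen : x.length + y'.length ≤ n := by
          have hxlen : 0 < x.length := List.length_pos_iff.mpr hx
          have : (x ++ y').length = x.length + y'.length := List.length_append
          omega
        obtain ⟨z, i, j, hxe, hye⟩ := ih x y' hlen h'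
        exact ⟨z, i, i + j, hxe, by rw [lp_add, ← hxe, ← hye]⟩
      · obtain ⟨x', rfl⟩ := pref_of_eq h.symm (Nat.le_of_lt hlt)
        have h' : x' ++ y = y ++ x' := by
          have h2 : y ++ (x' ++ y) = y ++ (y ++ x') := by simpa [List.append_assoc] using h
          exact List.append_cancel_left h2
        have hlen : x'.length + y.length ≤ n := by
          have hylen : 0 < y.length := List.length_pos_iff.mpr hy
          have : (y ++ x').length = y.length + x'.length := List.length_append
          omega
        obtain ⟨z, i, j, hxe, hye⟩ := ih x' y hlen h'
        exact ⟨z, j + i, j, by rw [lp_add, ← hxe, ← hye], hye⟩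

/-- x·x·y = y·x·x implies x·y = y·x -/
theorem sq_comm {x y : List α} (h : x ++ x ++ y = y ++ x ++ x) : x ++ y = y ++ x := by
  suffices H : ∀ n (x y : List α), y.length ≤ n → x ++ x ++ y = y ++ x ++ x →
      x ++ y = y ++ x from H y.length x y le_rfl h
  intro n
  induction n with
  | zero =>
      intro x y hl h
      have hy : y = [] := List.eq_nil_of_length_eq_zero (by omega)
      simp [hy]
  | succ n ih =>
      intro x y hl h
      rcases eq_or_ne x [] with rfl | hx
      · simp
      rcases eq_or_ne y [] with rfl | hy
      · simp
      rcases le_or_gt x.length y.length with hle | hlt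
      · -- x prefix of y
        have hpre : x <+: y := by
          refine pref_of_eq (a := x) (b := x ++ y) (c := y) (d := x ++ x) ?_ hle
          simpa [List.append_assoc] using h
        obtain ⟨y', rfl⟩ := hpre
        have h' : x ++ x ++ y' = y' ++ x ++ x := by
          have := h
          simp only [List.append_assoc] at this
          have := List.append_cancel_left this
          simpa [List.append_assoc] using this
        have hlen : y'.length ≤ n := by
          have hxlen : 0 < x.length := List.length_pos_iff.mpr hx
          have : (x ++ y').length = x.length + y'.length := List.length_append
          omega
        have hcomm := ih x y' hlen h'
        calc x ++ (x ++ y') = x ++ (y' ++ x) := by rw [hcomm]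
          _ = (x ++ y') ++ x := by simp [List.append_assoc]
      · -- y proper prefix of x
        have hpre : y <+: x := by
          refine pref_of_eq (a := y) (b := x ++ x) (c := x) (d := x ++ y) ?_ (Nat.le_of_lt hlt)
          simpa [List.append_assoc] using h.symm
        obtain ⟨x', rfl⟩ := hpre
        have h' : (x' ++ y) ++ (x' ++ y) = (y ++ x') ++ (y ++ x') := by
          have := h
          simp only [List.append_assoc] at this
          have := List.append_cancel_left this
          simpa [List.append_assoc] using this
        have hxy : x' ++ y = y ++ x' :=
          List.append_inj_left h' (by simp [Nat.add_comm])
        calc (y ++ x') ++ y = y ++ (x' ++ y) := by simp [List.append_assoc]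
          _ = y ++ (y ++ x') := by rw [hxy]

end WordTool

namespace WordTool
open List

section Theta
variable {α : Type*} {t : α → α} {θ : List α → List α}
variable (ht : ∀ a, t (t a) = a) (hθ : ∀ u : List α, θ u = (u.map t).reverse)
include hθ

theorem th_append (a b : List α) : θ (a ++ b) = θ b ++ θ a := by simp [hθ]

theorem th_nil : θ ([] : List α) = [] := by simp [hθ]

theorem th_len (a : List α) : (θ a).length = a.length := by simp [hθ]

theorem th_ne_nil {a : List α} (h : a ≠ []) : θ a ≠ [] := by
  intro hc
  have := th_len (θ := θ) hθ a
  rw [hc] at this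
  exact h (List.eq_nil_of_length_eq_zero this.symm)

include ht in
theorem th_th (a : List α) : θ (θ a) = a := by
  rw [hθ, hθ, List.map_reverse, List.reverse_reverse, List.map_map]
  have hid : t ∘ t = id := funext ht
  rw [hid, List.map_id]

theorem th_pow (a : List α) (n : ℕ) : θ (listPow a n) = listPow (θ a) n := by
  induction n with
  | zero => rw [lp_zero, lp_zero, th_nil hθ]
  | succ n ih => rw [lp_succ, th_append hθ, ih, lp_succ']

theorem palpow {p q : List α} (hp : θ p = p) (hq : θ q = q) (k : ℕ) :
    θ (listPow (p ++ q) k ++ p) = listPow (p ++ q) k ++ p := by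
  rw [th_append hθ, th_pow hθ, th_append hθ, hp, hq, lp_shift]

theorem pows_pal {z : List α} (hz : θ z = z) {p q : List α} (k : ℕ)
    (hp : ∃ a, p = listPow z a) (hq : ∃ b, q = listPow z b) :
    θ (listPow (p ++ q) k ++ p) = listPow (p ++ q) k ++ p := by
  obtain ⟨a, rfl⟩ := hp
  obtain ⟨b, rfl⟩ := hq
  rw [← lp_add, lp_mul, ← lp_add, th_pow hθ, hz]

include ht in
theorem conjpal {x z y : List α} (hxy : x = θ y) (hxne : x ≠ [])
    (h : x ++ z = z ++ y) : θ z = z := by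
  obtain ⟨p, q, k, hx, hy, hz⟩ := conj hxne h
  have he : θ p ++ θ q = p ++ q := by
    rw [← th_append hθ, ← hy, ← hxy, hx]
  obtain ⟨hp, hq⟩ := List.append_inj he (th_len hθ p)
  rw [hz]
  exact palpow hθ hp hq k

theorem comm_pal {c q : List α} (hc : c ++ q = q ++ c) (hpal : θ (c ++ q) = c ++ q)
    (hne : c ++ q ≠ []) :
    ∃ z, θ z = z ∧ ∃ i j, c = listPow z i ∧ q = listPow z j := by
  obtain ⟨z, i, j, rfl, rfl⟩ := comm hc
  rw [← lp_add] at hpal hne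
  rw [th_pow hθ] at hpal
  have hij : i + j ≠ 0 := by
    intro hc0
    rw [hc0, lp_zero] at hne
    exact hne rfl
  have hz : θ z = z := pow_inj hij hpal (th_len hθ z)
  exact ⟨z, hz, i, j, rfl, rfl⟩

theorem lemE (k : ℕ) (p q : List α)
    (h : (q ++ p) ++ (listPow (p ++ q) k ++ p) = (listPow (p ++ q) k ++ p) ++ (p ++ q)) :
    q ++ p = p ++ q := by
  cases k with
  | zero =>
      have h' : p ++ p ++ q = q ++ (p ++ p) := by
        simpa [lp_zero, List.append_assoc] using h.symm
      exact (sq_comm (by simpa [List.append_assoc] using h')).symm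
  | succ m =>
      have e2 : (q ++ p) ++ (listPow (p ++ q) (m + 1) ++ p) =
          (p ++ q) ++ ((listPow (p ++ q) m ++ p) ++ (p ++ q)) := by
        rw [h, lp_succ]
        simp [List.append_assoc]
      exact List.append_inj_left e2 (by simp [Nat.add_comm])

include ht in
theorem lemC5 {v s : List α} (hv : v ≠ [])
    (h : (v ++ θ v) ++ s = s ++ (v ++ v)) : θ s = s := by
  have hvv : v ++ θ v ≠ [] := by
    intro hc; exact hv (List.append_eq_nil_iff.mp hc).1
  obtain ⟨p, q, k, h1, h2, h3⟩ := conj hvv h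
  rcases le_or_gt q.length v.length with hle | hlt
  · -- v = q ++ c
    obtain ⟨c, hvqc⟩ := pref_of_eq h2.symm hle
    have hp : p = c ++ (q ++ c) := by
      have h2' : q ++ (c ++ (q ++ c)) = q ++ p := by
        simpa [← hvqc, List.append_assoc] using h2
      exact (List.append_cancel_left h2').symm
    have e : (q ++ c) ++ (θ c ++ θ q) = (c ++ q) ++ (c ++ q) := by
      have h1' := h1
      rw [← hvqc, th_append hθ, hp] at h1'
      exact h1'.trans (by simp [List.append_assoc])
    obtain ⟨hqc, hth⟩ := List.append_inj e (by simp [Nat.add_comm])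
    have hpal : θ (q ++ c) = q ++ c := by
      rw [th_append hθ, hth, ← hqc]
    obtain ⟨z, hz, i, j, hq, hc⟩ := comm_pal hθ hqc hpal (hvqc ▸ hv)
    rw [h3]
    refine pows_pal hθ hz k ⟨j + (i + j), ?_⟩ ⟨i, hq⟩
    rw [hp, hq, hc, lp_add, lp_add]
  · -- q = v ++ d
    obtain ⟨d, hqvd⟩ := pref_of_eq h2 (Nat.le_of_lt hlt)
    have hvdp : v = d ++ p := by
      have h2' : v ++ v = v ++ (d ++ p) := by
        rw [h2, ← hqvd, List.append_assoc]
      exact List.append_cancel_left h2'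
    have e : (d ++ p) ++ (θ p ++ θ d) = (p ++ d) ++ (p ++ d) := by
      have h1' := h1
      rw [hvdp, th_append hθ, ← hqvd, hvdp] at h1'
      exact h1'.trans (by simp [List.append_assoc])
    obtain ⟨hdp, hth⟩ := List.append_inj e (by simp [Nat.add_comm])
    have hpal : θ (d ++ p) = d ++ p := by
      rw [th_append hθ, hth, ← hdp]
    obtain ⟨z, hz, i, j, hd, hpz⟩ := comm_pal hθ hdp hpal (hvdp ▸ hv)
    rw [h3]
    refine pows_pal hθ hz k ⟨j, hpz⟩ ⟨i + j + i, ?_⟩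
    rw [← hqvd, hvdp, hd, hpz, lp_add, lp_add]

end Theta
end WordTool


namespace WordTool
open List

section Main
variable {α : Type*} {t : α → α} {θ : List α → List α}
variable (ht : ∀ a, t (t a) = a) (hθ : ∀ u : List α, θ u = (u.map t).reverse)
include ht hθ

theorem lemC8c {v s : List α} (hs : s ≠ [])
    (h8 : s ++ v = θ v ++ θ s) (hY : θ s ++ v = v ++ s) : θ s = s := by
  obtain ⟨p, q, k, h1, h2, h3⟩ := conj (th_ne_nil hθ hs) hY
  have he : θ q ++ θ p = q ++ p := by
    rw [← th_append hθ, ← h1, th_th ht hθ, h2]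
  obtain ⟨hq, hp⟩ := List.append_inj he (th_len hθ q)
  have hθv : θ v = v := by rw [h3]; exact palpow hθ hp hq k
  rw [hθv, h1] at h8
  rw [h2, h3] at h8
  have hE := lemE (θ := θ) hθ k p q h8
  rw [h1, h2]
  exact hE.symm

theorem lemC6 {v s : List α} (hs : s ≠ []) (hv : v ≠ [])
    (h6 : s ++ v = v ++ θ s)
    (hm : (θ s ++ v) ++ v ∈ biCat θ v (s ++ v)) : θ s = s := by
  obtain ⟨p, q, k, h1, h2, h3⟩ := conj hs h6
  -- h1 : s = p ++ q, h2 : θ s = q ++ p, h3 : v = (pq)^k ++ p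
  have he : θ q ++ θ p = q ++ p := by
    rw [← th_append hθ, ← h1]; exact h2
  obtain ⟨hq, hp⟩ := List.append_inj he (th_len hθ q)
  have hθv : θ v = v := by rw [h3]; exact palpow hθ hp hq k
  have hw : s ++ v = listPow (p ++ q) (k + 1) ++ p := by
    rw [h1, h3, lp_succ]; simp [List.append_assoc]
  have hθw : θ (s ++ v) = s ++ v := by
    rw [hw]; exact palpow hθ hp hq (k + 1)
  have finB : (θ s ++ v) ++ v = (s ++ v) ++ v → θ s = s := by
    intro e
    have e1 : θ s ++ v = s ++ v :=
      List.append_inj_left e (by simp [th_len hθ])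
    exact List.append_inj_left e1 (th_len hθ s)
  have finA : (θ s ++ v) ++ v = v ++ (s ++ v) → θ s = s := by
    intro e
    have e' : (θ s ++ v) ++ v = (v ++ s) ++ v := e.trans (by simp [List.append_assoc])
    have hA : θ s ++ v = v ++ s :=
      List.append_inj_left e' (by simp [th_len hθ, Nat.add_comm])
    rw [h2, h3] at hA
    rw [h1] at hA
    have hE := lemE (θ := θ) hθ k p q hA
    rw [h2, h1]
    exact hE
  simp only [biCat, Set.mem_insert_iff, Set.mem_singleton_iff] at hm
  rcases hm with e | e | e | e | e | e | e | e
  · exact finA e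
  · rw [hθw] at e; exact finA e
  · rw [hθv] at e; exact finA e
  · rw [hθv, hθw] at e; exact finA e
  · exact finB e
  · rw [hθv] at e; exact finB e
  · rw [hθw] at e; exact finB e
  · rw [hθw, hθv] at e; exact finB e

end Main
end WordTool


/-- If `uv = θ(v)w` and `u ⇄θ v = v ⇄θ w`, then one of the six listed
alternatives holds. -/
theorem conj_biCat_case3 {α : Type*} (t : α → α) (ht : ∀ a, t (t a) = a)
    (θ : List α → List α) (hθ : ∀ u : List α, θ u = (u.map t).reverse)
    (u v w : List α) (hu : u ≠ []) (hv : v ≠ []) (hw : w ≠ [])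
    (h1 : u ++ v = θ v ++ w) (h2 : biCat θ u v = biCat θ v w) :
    (u = θ w ∧ ∃ γ : List α, θ γ = γ ∧ v = γ ++ w) ∨
    (∃ x y : List α, θ x = x ∧ θ y = y ∧ ∃ j : ℕ,
      u = listPow (x ++ y) (j + 1) ++ x ∧ u = w ∧ v = y ++ x) ∨
    (∃ x y : List α, θ y = y ∧ u = x ++ y ∧ u = θ w ∧ v = θ x) ∨
    (∃ x y : List α, θ x = x ∧ θ y = y ∧ u = x ++ y ∧ u = θ w ∧ v = x) ∨
    (∃ a : List α, θ a = a ∧ ∃ m n : ℕ, 1 ≤ m ∧ 1 ≤ n ∧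
      u = listPow a m ∧ w = u ∧ v = listPow a n) ∨
    (∃ t' : List α, t' ≠ [] ∧ ∃ k n : ℕ,
      u = θ t' ++ listPow (t' ++ θ t') k ∧ u = θ w ∧
      v = listPow (t' ++ θ t') n ++ t') := by
  classical
  open WordTool in
  rcases le_or_gt u.length v.length with hle | hlt
  · -- |u| ≤ |v| : disjunct 1 directly from h1
    obtain ⟨g, hg⟩ := pref_of_eq h1 (by rw [th_len hθ]; exact hle)
    -- hg : u ++ g = θ v
    have hvgw : v ++ [] = g ++ w ∧ θ g ++ θ u = v := by
      constructor
      · have h1' : u ++ v = u ++ (g ++ w) := by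
          rw [h1, ← hg, List.append_assoc]
        rw [List.append_nil]
        exact List.append_cancel_left h1'
      · rw [← th_append hθ, hg, th_th ht hθ]
    obtain ⟨hv1, hv2⟩ := hvgw
    rw [List.append_nil] at hv1
    -- θ g ++ θ u = g ++ w
    have e : θ g ++ θ u = g ++ w := by rw [hv2, hv1]
    obtain ⟨hg1, hg2⟩ := List.append_inj e (th_len hθ g)
    exact Or.inl ⟨by rw [← hg2, th_th ht hθ], g, hg1, hv1⟩
  · -- |v| < |u|
    obtain ⟨s, hus⟩ := pref_of_eq h1.symm (by rw [th_len hθ]; omega)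
    -- hus : θ v ++ s = u
    have hueq : u = θ v ++ s := hus.symm
    have hs : s ≠ [] := by
      intro hc
      rw [hc, List.append_nil] at hueq
      have := th_len (θ := θ) hθ v
      rw [← hueq] at this
      omega
    have hweq : w = s ++ v := by
      have h1' : θ v ++ (s ++ v) = θ v ++ w := by
        rw [← List.append_assoc, hus, h1]
      exact (List.append_cancel_left h1').symm
    subst hueq hweq
    have hθu' : θ (θ v ++ s) = θ s ++ v := by
      rw [th_append hθ, th_th ht hθ]
    have hθvne : θ v ≠ [] := th_ne_nil hθ hv
    -- the goal follows from θ s = s via disjunct 3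
    suffices hθs : θ s = s by
      refine Or.inr (Or.inr (Or.inl ⟨θ v, s, hθs, rfl, ?_, (th_th ht hθ v).symm⟩))
      rw [th_append hθ, hθs]
    -- memberships
    have hmA : (s ++ v) ++ v ∈ biCat θ (θ v ++ s) v := by
      rw [h2]
      simp only [biCat, Set.mem_insert_iff, Set.mem_singleton_iff]
      tauto
    have hmB : θ (θ v ++ s) ++ v ∈ biCat θ v (s ++ v) := by
      rw [← h2]
      simp only [biCat, Set.mem_insert_iff, Set.mem_singleton_iff]
      tauto
    have hmC : v ++ (s ++ v) ∈ biCat θ (θ v ++ s) v := by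
      rw [h2]
      simp only [biCat, Set.mem_insert_iff, Set.mem_singleton_iff]
      tauto
    rw [hθu'] at hmB
    have hlen1 : (s ++ v).length = (θ v ++ s).length := by
      simp [th_len hθ, Nat.add_comm]
    simp only [biCat, Set.mem_insert_iff, Set.mem_singleton_iff] at hmA
    rcases hmA with e | e | e | e | e | e | e | e
    · -- X1 : (s++v)++v = (θv++s)++v
      have hx : s ++ v = θ v ++ s := List.append_inj_left e hlen1
      exact conjpal ht hθ rfl hθvne hx.symm
    · -- X2 : (s++v)++v = (θv++s)++θv
      have hx : s ++ v = θ v ++ s := (List.append_inj' e (th_len hθ v).symm).1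
      exact conjpal ht hθ rfl hθvne hx.symm
    · -- X3 : (s++v)++v = θ(θv++s)++v
      rw [hθu'] at e
      have e1 : s ++ v = θ s ++ v :=
        List.append_inj_left e (by simp [th_len hθ])
      exact (List.append_inj_left e1 (th_len hθ s).symm).symm
    · -- X4
      rw [hθu'] at e
      have e1 : s ++ v = θ s ++ v := (List.append_inj' e (th_len hθ v).symm).1
      exact (List.append_inj_left e1 (th_len hθ s).symm).symm
    · -- X5 : (s++v)++v = v++(θv++s)
      have e' : (v ++ θ v) ++ s = s ++ (v ++ v) := by
        simpa [List.append_assoc] using e.symm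
      exact lemC5 ht hθ hv e'
    · -- X6 : (s++v)++v = v++θ(θv++s)
      rw [hθu'] at e
      have e' : (s ++ v) ++ v = (v ++ θ s) ++ v := e.trans (by simp [List.append_assoc])
      have h6 : s ++ v = v ++ θ s :=
        List.append_inj_left e' (by simp [th_len hθ, Nat.add_comm])
      exact lemC6 ht hθ hs hv h6 hmB
    · -- X7 : (s++v)++v = θv++(θv++s)
      have e' : (θ v ++ θ v) ++ s = s ++ (v ++ v) := by
        simpa [List.append_assoc] using e.symm
      exact conjpal ht hθ (th_append hθ v v).symm (by simp [hθvne]) e'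
    · -- X8 : (s++v)++v = θv++θ(θv++s)
      rw [hθu'] at e
      have e' : (s ++ v) ++ v = (θ v ++ θ s) ++ v := e.trans (by simp [List.append_assoc])
      have h8 : s ++ v = θ v ++ θ s :=
        List.append_inj_left e' (by simp [th_len hθ, Nat.add_comm])
      -- second membership analysis
      simp only [biCat, Set.mem_insert_iff, Set.mem_singleton_iff] at hmC
      have hY1 : v = θ v → θ s = s := by
        intro hvθ
        have h6 : s ++ v = v ++ θ s := by rw [h8, ← hvθ]
        exact lemC6 ht hθ hs hv h6 hmB
      rcases hmC with eY | eY | eY | eY | eY | eY | eY | eY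
      · -- Y1 : v++(s++v) = (θv++s)++v
        have eY' : v ++ (s ++ v) = θ v ++ (s ++ v) := eY.trans (by simp [List.append_assoc])
        exact hY1 (List.append_inj_left eY' (th_len hθ v).symm)
      · -- Y2 : v++(s++v) = (θv++s)++θv
        have eY' : v ++ (s ++ v) = θ v ++ (s ++ θ v) := eY.trans (by simp [List.append_assoc])
        exact hY1 (List.append_inj_left eY' (th_len hθ v).symm)
      · -- Y3 : v++(s++v) = θ(θv++s)++v
        rw [hθu'] at eY
        have eY' : (v ++ s) ++ v = (θ s ++ v) ++ v := by
          simpa [List.append_assoc] using eY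
        have hY : v ++ s = θ s ++ v :=
          List.append_inj_left eY' (by simp [th_len hθ, Nat.add_comm])
        exact lemC8c ht hθ hs h8 hY.symm
      · -- Y4
        rw [hθu'] at eY
        have eY' : (v ++ s) ++ v = (θ s ++ v) ++ θ v := by
          simpa [List.append_assoc] using eY
        have hY : v ++ s = θ s ++ v := (List.append_inj' eY' (th_len hθ v).symm).1
        exact lemC8c ht hθ hs h8 hY.symm
      · -- Y5 : v++(s++v) = v++(θv++s)
        have hx : s ++ v = θ v ++ s := List.append_cancel_left eY
        exact conjpal ht hθ rfl hθvne hx.symm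
      · -- Y6 : v++(s++v) = v++θ(θv++s)
        rw [hθu'] at eY
        have hx : s ++ v = θ s ++ v := List.append_cancel_left eY
        exact (List.append_inj_left hx (th_len hθ s).symm).symm
      · -- Y7 : v++(s++v) = θv++(θv++s)
        have hvθ : v = θ v := List.append_inj_left eY (th_len hθ v).symm
        rw [← hvθ] at eY
        have hx : s ++ v = v ++ s := List.append_cancel_left eY
        have h8' : s ++ v = v ++ θ s := by rw [h8, ← hvθ]
        rw [hx] at h8'
        exact (List.append_cancel_left h8').symm
      · -- Y8 : v++(s++v) = θv++θ(θv++s)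
        rw [hθu'] at eY
        have hvθ : v = θ v := List.append_inj_left eY (th_len hθ v).symm
        rw [← hvθ] at eY
        have hx : s ++ v = θ s ++ v := List.append_cancel_left eY
        exact (List.append_inj_left hx (th_len hθ s).symm).symm
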